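/- Let p and q be coprime positive integers. Then 6·∑_{n=1}^{pq−1} (pq − n)·j(n) = −(p−1)(p+1)(q−1)(q+1), the sum being over the integers n with 1 ≤ n ≤ pq−1. -/

import Mathlib

open scoped Classical

/-- The signature jump function `j_{p,q}(n/pq)` of the `(p,q)` torus knot:
`0` if `p ∣ n` or `q ∣ n`; `1` if `n = qx + py` with `0 < x < p`, `0 < y < q`;
`−1` otherwise. -/
noncomputable def torusJump (p q n : ℤ) : ℤ :=
  if p ∣ n ∨ q ∣ n then 0
  else if ∃ x y : ℤ, 0 < x ∧ x < p ∧ 0 < y ∧ y < q ∧ n = q * x + p * y then 1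
  else -1

section WeightedJumpAux

open Finset

lemma sum_Ioc_split (a b c : ℤ) (hab : a ≤ b) (hbc : b ≤ c) (f : ℤ → ℤ) :
    ∑ i ∈ Ioc a b, f i + ∑ i ∈ Ioc b c, f i = ∑ i ∈ Ioc a c, f i := by
  have hd : Disjoint (Ioc a b) (Ioc b c) := by
    rw [Finset.disjoint_left]; intro z hz hz'
    simp only [mem_Ioc] at hz hz'; omega

  rw [← Finset.sum_union hd, Finset.Ioc_union_Ioc_eq_Ioc hab hbc]

lemma Ioc_succ_insert (n : ℤ) (hn : 0 ≤ n) :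
    Ioc (0:ℤ) (n+1) = insert (n+1) (Ioc (0:ℤ) n) := by
  ext z; simp only [mem_Ioc, mem_insert]; omega

lemma affine_sum (A B m : ℤ) (hm : 0 ≤ m) :
    2 * ∑ y ∈ Ioc (0:ℤ) m, (A + B * y) = 2 * A * m + B * (m * (m + 1)) := by
  refine Int.le_induction
    (motive := fun m _ => 2 * ∑ y ∈ Ioc (0:ℤ) m, (A + B * y) = 2 * A * m + B * (m * (m + 1)))
    ?_ ?_ m hm
  · simp
  · intro n hn ih
    rw [Ioc_succ_insert n hn, Finset.sum_insert (by simp)]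
    ring_nf
    ring_nf at ih
    linarith

lemma quad_sum (m : ℤ) (hm : 0 ≤ m) :
    6 * ∑ y ∈ Ioc (0:ℤ) m, y ^ 2 = m * (m + 1) * (2 * m + 1) := by
  refine Int.le_induction
    (motive := fun m _ => 6 * ∑ y ∈ Ioc (0:ℤ) m, y ^ 2 = m * (m + 1) * (2 * m + 1))
    ?_ ?_ m hm
  · simp
  · intro n hn ih
    rw [Ioc_succ_insert n hn, Finset.sum_insert (by simp)]
    ring_nf
    ring_nf at ih
    linarith

lemma lin_sum (m : ℤ) (hm : 0 ≤ m) :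
    2 * ∑ y ∈ Ioc (0:ℤ) m, y = m * (m + 1) := by
  have := affine_sum 0 1 m hm
  simpa using this

lemma sum_reflect (m : ℤ) (F : ℤ → ℤ) :
    ∑ x ∈ Ioc (0:ℤ) m, F x = ∑ x ∈ Ioc (0:ℤ) m, F (m + 1 - x) := by
  refine Finset.sum_nbij' (fun x => m + 1 - x) (fun x => m + 1 - x) ?_ ?_ ?_ ?_ ?_
  · intro a ha; simp only [mem_Ioc] at *; omega
  · intro a ha; simp only [mem_Ioc] at *; omega
  · intro a _; ring
  · intro a _; ring
  · intro a _; ring_nf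

lemma sum_emod_bij (p q : ℤ) (hp : 0 < p) (hpq : IsCoprime p q) (F : ℤ → ℤ) :
    ∑ u ∈ Ioc (0:ℤ) (p-1), F ((q * u) % p) = ∑ r ∈ Ioc (0:ℤ) (p-1), F r := by
  obtain ⟨a, c, hac⟩ := hpq
  have hne : p ≠ 0 := hp.ne'
  have key : ∀ u, (c * (q * u)) % p = u % p := by
    intro u
    have : c * (q * u) = u + p * (-(a * u)) + p * 0 := by linear_combination u * hac
    rw [this]
    simp [Int.add_mul_emod_self_left]
  refine Finset.sum_nbij' (fun u => (q * u) % p) (fun r => (c * r) % p) ?_ ?_ ?_ ?_ ?_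
  · intro u hu
    simp only [mem_Ioc] at hu ⊢
    have h1 : 0 ≤ (q * u) % p := Int.emod_nonneg _ hne
    have h2 : (q * u) % p < p := Int.emod_lt_of_pos _ hp
    have h3 : (q * u) % p ≠ 0 := by
      intro h0
      have hd : p ∣ q * u := Int.dvd_of_emod_eq_zero h0
      have : p ∣ u := by
        have hcop : IsCoprime p q := ⟨a, c, hac⟩
        exact hcop.dvd_of_dvd_mul_left hd
      have := Int.le_of_dvd (by omega) this
      omega
    omega
  · intro r hr
    simp only [mem_Ioc] at hr ⊢
    have h1 : 0 ≤ (c * r) % p := Int.emod_nonneg _ hne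
    have h2 : (c * r) % p < p := Int.emod_lt_of_pos _ hp
    have h3 : (c * r) % p ≠ 0 := by
      intro h0
      have hd : p ∣ c * r := Int.dvd_of_emod_eq_zero h0
      have hpr : p ∣ r := by
        have h4 : r = p * (a * r) + (c * r) * q := by linear_combination r * hac.symm
        rw [h4]
        exact dvd_add (dvd_mul_right p _) (hd.mul_right q)
      have := Int.le_of_dvd (by omega) hpr
      omega
    omega
  · intro u hu
    simp only [mem_Ioc] at hu
    show (c * ((q * u) % p)) % p = u
    have h1 : (c * ((q * u) % p)) % p = (c * (q * u)) % p := by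
      rw [Int.mul_emod, Int.emod_emod_of_dvd _ dvd_rfl, ← Int.mul_emod]
    rw [h1, key u, Int.emod_eq_of_lt (by omega) (by omega)]
  · intro r hr
    simp only [mem_Ioc] at hr
    show (q * ((c * r) % p)) % p = r
    have h1 : (q * ((c * r) % p)) % p = (q * (c * r)) % p := by
      rw [Int.mul_emod, Int.emod_emod_of_dvd _ dvd_rfl, ← Int.mul_emod]
    have h2 : q * (c * r) = r + p * (-(a * r)) := by linear_combination r * hac
    rw [h1, h2, Int.add_mul_emod_self_left, Int.emod_eq_of_lt (by omega) (by omega)]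
  · intro u _; rfl

lemma not_dvd_s (hpq : IsCoprime p q) (hp : 0 < p) (hx : 0 < x) (hx2 : x < p) (t : ℤ) :
    ¬ p ∣ (q * x + p * y - t * (p * q)) := by
  intro hd
  have h1 : p ∣ q * x := by
    have : q * x = (q * x + p * y - t * (p * q)) + p * (t * q - y) := by ring
    rw [this]
    exact dvd_add hd (dvd_mul_right p _)
  have h2 : p ∣ x := hpq.dvd_of_dvd_mul_left h1
  have := Int.le_of_dvd hx h2
  omega

lemma not_dvd_s' (hpq : IsCoprime p q) (hq : 0 < q) (hy : 0 < y) (hy2 : y < q) (t : ℤ) :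
    ¬ q ∣ (q * x + p * y - t * (p * q)) := by
  intro hd
  have h1 : q ∣ p * y := by
    have : p * y = (q * x + p * y - t * (p * q)) + q * (t * p - x) := by ring
    rw [this]
    exact dvd_add hd (dvd_mul_right q _)
  have h2 : q ∣ y := hpq.symm.dvd_of_dvd_mul_left h1
  have := Int.le_of_dvd hy h2
  omega

lemma jump_eval_pos (hp : 0 < p) (hq : 0 < q) (hpq : IsCoprime p q)
    (hx : 0 < x) (hx2 : x < p) (hy : 0 < y) (hy2 : y < q) :
    torusJump p q (q * x + p * y) = 1 := by
  unfold torusJump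
  rw [if_neg, if_pos ⟨x, y, hx, hx2, hy, hy2, rfl⟩]
  push_neg
  constructor
  · have := not_dvd_s (y := y) hpq hp hx hx2 0
    simpa using this
  · have := not_dvd_s' (x := x) hpq hq hy hy2 0
    simpa using this

lemma jump_eval_neg (hp : 0 < p) (hq : 0 < q) (hpq : IsCoprime p q)
    (hx : 0 < x) (hx2 : x < p) (hy : 0 < y) (hy2 : y < q) :
    torusJump p q (q * x + p * y - p * q) = -1 := by
  unfold torusJump
  rw [if_neg, if_neg]
  · rintro ⟨x', y', hx', hx2', hy', hy2', heq⟩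
    have hd : p ∣ x - x' := by
      apply hpq.dvd_of_dvd_mul_left
      exact ⟨q - y + y', by linear_combination heq⟩
    have hxx : x = x' := by
      have := Int.eq_zero_of_abs_lt_dvd hd (by rw [abs_lt]; omega)
      omega
    subst hxx
    have hyy : p * (y - y') = p * q := by linear_combination heq
    have : y - y' = q := by
      exact mul_left_cancel₀ hp.ne' hyy
    omega
  · push_neg
    constructor
    · have := not_dvd_s (y := y) hpq hp hx hx2 1
      simpa using this
    · have := not_dvd_s' (x := x) hpq hq hy hy2 1
      simpa using this

lemma s_ne (p q x y : ℤ) (hp : 0 < p) (hpq : IsCoprime p q)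
    (hx : 0 < x) (hx2 : x ≤ p - 1) : q * x + p * y ≠ p * q := by
  intro h
  have h1 : p ∣ q * x := ⟨q - y, by linear_combination h⟩
  have h2 : p ∣ x := hpq.dvd_of_dvd_mul_left h1
  have := Int.le_of_dvd hx h2
  omega

lemma gpair (p q x y : ℤ) (hp : 0 < p) (hq : 0 < q) (hpq : IsCoprime p q)
    (hx : 0 < x) (hx2 : x ≤ p - 1) (hy : 0 < y) (hy2 : y ≤ q - 1) :
    (if q * x + p * y < p * q then p * q - (q * x + p * y) else q * x + p * y - 2 * (p * q))
    + (if q * (p - x) + p * (q - y) < p * q then p * q - (q * (p - x) + p * (q - y))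
        else q * (p - x) + p * (q - y) - 2 * (p * q))
    = 2 * |q * x + p * y - p * q| - p * q := by
  have hrw : q * (p - x) + p * (q - y) = 2 * (p * q) - (q * x + p * y) := by ring
  rw [hrw]
  have hne := s_ne p q x y hp hpq hx hx2
  rcases lt_or_gt_of_ne hne with h | h
  · rw [if_pos h, if_neg (by omega), abs_of_neg (by omega)]
    ring
  · rw [if_neg (by omega), if_pos (by omega), abs_of_pos (by omega)]
    ring

lemma innerA (p q u : ℤ) (hp : 0 < p) (hq : 0 < q) (hpq : IsCoprime p q)
    (hu1 : 0 < u) (hu2 : u ≤ p - 1) :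
    p * (2 * ∑ y ∈ Ioc (0:ℤ) (q-1), |p * y - q * u|) =
      2*q^2*u^2 - 2*((q*u) % p)^2 - 2*p*q^2*u + 2*p*((q*u) % p) + p^2*q*(q-1) := by
  set r := (q * u) % p with hrdef
  set k := (q * u) / p with hkdef
  have hdiv : q * u = p * k + r := (Int.mul_ediv_add_emod (q*u) p).symm
  have hr0 : 0 ≤ r := Int.emod_nonneg _ hp.ne'
  have hrp : r < p := Int.emod_lt_of_pos _ hp
  have hrne : r ≠ 0 := by
    intro h0
    have hd : p ∣ q * u := Int.dvd_of_emod_eq_zero h0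
    have : p ∣ u := hpq.dvd_of_dvd_mul_left hd
    have := Int.le_of_dvd hu1 this
    omega
  have hqu1 : q ≤ q * u := le_mul_of_one_le_right hq.le hu1
  have hqu2 : q * u ≤ q * (p - 1) := by
    exact mul_le_mul_of_nonneg_left hu2 hq.le
  have hk0 : 0 ≤ k := by nlinarith
  have hkq : k ≤ q - 1 := by nlinarith
  -- split the sum at k
  have hsplit := sum_Ioc_split 0 k (q-1) hk0 hkq (fun y => |p * y - q * u|)
  have e1 : ∀ y ∈ Ioc (0:ℤ) k, |p * y - q * u| = q * u + (-p) * y := by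
    intro y hy
    simp only [mem_Ioc] at hy
    have : p * y ≤ p * k := mul_le_mul_of_nonneg_left hy.2 hp.le
    rw [abs_of_neg (by omega)]
    ring
  have e2 : ∀ y ∈ Ioc k (q-1), |p * y - q * u| = -(q*u) + p * y := by
    intro y hy
    simp only [mem_Ioc] at hy
    have : p * (k+1) ≤ p * y := mul_le_mul_of_nonneg_left (by omega) hp.le
    rw [abs_of_pos (by nlinarith)]
    ring
  rw [Finset.sum_congr rfl e1] at hsplit
  rw [Finset.sum_congr rfl e2] at hsplit
  have g1 : 2 * ∑ y ∈ Ioc (0:ℤ) k, (q * u + (-p) * y) = 2*(q*u)*k + (-p) * (k*(k+1)) :=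
    affine_sum _ _ _ hk0
  have g2 : ∑ y ∈ Ioc k (q-1), (-(q*u) + p * y)
      = ∑ y ∈ Ioc (0:ℤ) (q-1), (-(q*u) + p * y) - ∑ y ∈ Ioc (0:ℤ) k, (-(q*u) + p * y) := by
    have := sum_Ioc_split 0 k (q-1) hk0 hkq (fun y => -(q*u) + p * y)
    omega
  have g3 : 2 * ∑ y ∈ Ioc (0:ℤ) (q-1), (-(q*u) + p * y) = 2*(-(q*u))*(q-1) + p*((q-1)*(q-1+1)) :=
    affine_sum _ _ _ (by omega)
  have g4 : 2 * ∑ y ∈ Ioc (0:ℤ) k, (-(q*u) + p * y) = 2*(-(q*u))*k + p*(k*(k+1)) :=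
    affine_sum _ _ _ hk0
  have hA : 2 * ∑ y ∈ Ioc (0:ℤ) (q-1), |p * y - q * u|
      = 2*(q*u)*k + (-p)*(k*(k+1)) + (2*(-(q*u))*(q-1) + p*((q-1)*(q-1+1))) - (2*(-(q*u))*k + p*(k*(k+1))) := by
    omega
  rw [hA]
  linear_combination (-2*(q*u - p*k + r - p)) * hdiv

lemma sumA (p q : ℤ) (hp : 0 < p) (hq : 0 < q) (hpq : IsCoprime p q) :
    6 * (p * ∑ u ∈ Ioc (0:ℤ) (p-1), (2 * ∑ y ∈ Ioc (0:ℤ) (q-1), |p * y - q * u|))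
    = 2*p*(p-1)*(2*p*q^2 - q^2 - 3*p*q + p + 1) := by
  have h1 : p * ∑ u ∈ Ioc (0:ℤ) (p-1), (2 * ∑ y ∈ Ioc (0:ℤ) (q-1), |p * y - q * u|)
      = ∑ u ∈ Ioc (0:ℤ) (p-1),
          (2*q^2*u^2 - 2*((q*u) % p)^2 - 2*p*q^2*u + 2*p*((q*u) % p) + p^2*q*(q-1)) := by
    rw [Finset.mul_sum]
    refine Finset.sum_congr rfl ?_
    intro u hu; simp only [mem_Ioc] at hu
    exact innerA p q u hp hq hpq hu.1 hu.2
  rw [h1]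
  have hb2 : ∑ u ∈ Ioc (0:ℤ) (p-1), ((q * u) % p)^2 = ∑ r ∈ Ioc (0:ℤ) (p-1), r^2 :=
    sum_emod_bij p q hp hpq (fun x => x^2)
  have hb1 : ∑ u ∈ Ioc (0:ℤ) (p-1), ((q * u) % p) = ∑ r ∈ Ioc (0:ℤ) (p-1), r :=
    sum_emod_bij p q hp hpq (fun x => x)
  have hsplit : ∑ u ∈ Ioc (0:ℤ) (p-1),
      (2*q^2*u^2 - 2*((q*u) % p)^2 - 2*p*q^2*u + 2*p*((q*u) % p) + p^2*q*(q-1))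
      = 2*q^2 * (∑ u ∈ Ioc (0:ℤ) (p-1), u^2) - 2 * (∑ u ∈ Ioc (0:ℤ) (p-1), ((q*u)%p)^2)
        - 2*p*q^2 * (∑ u ∈ Ioc (0:ℤ) (p-1), u) + 2*p * (∑ u ∈ Ioc (0:ℤ) (p-1), ((q*u)%p))
        + (p-1) * (p^2*q*(q-1)) := by
    simp only [Finset.sum_add_distrib, Finset.sum_sub_distrib, Finset.sum_const,
      ← Finset.mul_sum, nsmul_eq_mul, Int.card_Ioc]
    have : ((p - 1 - 0).toNat : ℤ) = p - 1 := by omega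
    rw [this, ← Finset.mul_sum]
  rw [hsplit, hb2, hb1]
  have hq2 := quad_sum (p-1) (by omega)
  have hl2 := lin_sum (p-1) (by omega)
  linear_combination (2*q^2 - 2) * hq2 + (6*p - 6*p*q^2) * hl2

lemma step4 (p q : ℤ) (hp : 0 < p) (hq : 0 < q) (hpq : IsCoprime p q) :
    2 * ∑ z ∈ Ioc (0:ℤ) (p-1) ×ˢ Ioc (0:ℤ) (q-1),
        (if q * z.1 + p * z.2 < p * q then p * q - (q * z.1 + p * z.2)
         else q * z.1 + p * z.2 - 2 * (p * q))
    = (∑ u ∈ Ioc (0:ℤ) (p-1), 2 * ∑ y ∈ Ioc (0:ℤ) (q-1), |p * y - q * u|)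
        - p * q * ((p-1) * (q-1)) := by
  set G : ℤ × ℤ → ℤ := fun z =>
    (if q * z.1 + p * z.2 < p * q then p * q - (q * z.1 + p * z.2)
     else q * z.1 + p * z.2 - 2 * (p * q)) with hG
  set R := Ioc (0:ℤ) (p-1) ×ˢ Ioc (0:ℤ) (q-1) with hR
  have hrefl : ∑ z ∈ R, G z = ∑ z ∈ R, G (p - z.1, q - z.2) := by
    refine Finset.sum_nbij' (fun z => (p - z.1, q - z.2)) (fun z => (p - z.1, q - z.2))
      ?_ ?_ ?_ ?_ ?_
    · rintro ⟨x, y⟩ h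
      simp only [hR, mem_product, mem_Ioc] at h ⊢
      omega
    · rintro ⟨x, y⟩ h
      simp only [hR, mem_product, mem_Ioc] at h ⊢
      omega
    · rintro ⟨x, y⟩ _
      simp only [Prod.mk.injEq]
      constructor <;> ring
    · rintro ⟨x, y⟩ _
      simp only [Prod.mk.injEq]
      constructor <;> ring
    · rintro ⟨x, y⟩ _
      show G (x, y) = G (p - (p - x), q - (q - y))
      norm_num
  have h2 : 2 * ∑ z ∈ R, G z = ∑ z ∈ R, (G z + G (p - z.1, q - z.2)) := by
    rw [Finset.sum_add_distrib, ← hrefl]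
    ring
  rw [h2]
  have h3 : ∑ z ∈ R, (G z + G (p - z.1, q - z.2))
      = ∑ z ∈ R, (2 * |q * z.1 + p * z.2 - p * q| - p * q) := by
    refine Finset.sum_congr rfl ?_
    rintro ⟨x, y⟩ h
    simp only [hR, mem_product, mem_Ioc] at h
    exact gpair p q x y hp hq hpq h.1.1 h.1.2 h.2.1 h.2.2
  rw [h3, Finset.sum_sub_distrib, Finset.sum_const]
  have hcard : (R.card : ℤ) = (p - 1) * (q - 1) := by
    rw [hR, Finset.card_product, Int.card_Ioc, Int.card_Ioc]
    push_cast
    rw [show ((p-1-0:ℤ).toNat:ℤ) = p-1 by omega, show ((q-1-0:ℤ).toNat:ℤ) = q-1 by omega]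
  have h4 : ∑ z ∈ R, 2 * |q * z.1 + p * z.2 - p * q|
      = ∑ u ∈ Ioc (0:ℤ) (p-1), 2 * ∑ y ∈ Ioc (0:ℤ) (q-1), |p * y - q * u| := by
    rw [hR, Finset.sum_product]
    rw [sum_reflect (p-1) (fun x => ∑ y ∈ Ioc (0:ℤ) (q-1), 2 * |q * x + p * y - p * q|)]
    refine Finset.sum_congr rfl ?_
    intro u hu
    rw [Finset.mul_sum]
    refine Finset.sum_congr rfl ?_
    intro y hy
    congr 1
    congr 1
    ring
  rw [h4, nsmul_eq_mul, hcard]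
  ring

lemma step1 (p q : ℤ) (hp : 0 < p) (hq : 0 < q) (hpq : IsCoprime p q) :
    ∑ n ∈ Ioc (0:ℤ) (p * q - 1), (p * q - n) * torusJump p q n
    = ∑ z ∈ Ioc (0:ℤ) (p-1) ×ˢ Ioc (0:ℤ) (q-1),
        (if q * z.1 + p * z.2 < p * q then p * q - (q * z.1 + p * z.2)
         else q * z.1 + p * z.2 - 2 * (p * q)) := by
  obtain ⟨a, c, hac⟩ := hpq
  have hpq : IsCoprime p q := ⟨a, c, hac⟩
  obtain ⟨b, d, hbd⟩ := hpq.symm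
  have hzero : ∑ n ∈ (Ioc (0:ℤ) (p * q - 1)).filter (fun n => ¬(p ∣ n ∨ q ∣ n)),
      (p * q - n) * torusJump p q n
      = ∑ n ∈ Ioc (0:ℤ) (p * q - 1), (p * q - n) * torusJump p q n := by
    refine Finset.sum_subset (Finset.filter_subset _ _) ?_
    intro n hn hnot
    have hd : p ∣ n ∨ q ∣ n := by
      by_contra h
      exact hnot (Finset.mem_filter.mpr ⟨hn, h⟩)
    unfold torusJump
    rw [if_pos hd]
    ring
  rw [← hzero]
  symm
  refine Finset.sum_nbij'
    (i := fun z => if q * z.1 + p * z.2 < p * q then q * z.1 + p * z.2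
                   else q * z.1 + p * z.2 - p * q)
    (j := fun n => ((c * n) % p, (d * n) % q)) ?_ ?_ ?_ ?_ ?_
  -- hi : maps into T0
  · rintro ⟨x, y⟩ hz
    simp only [mem_product, mem_Ioc] at hz
    obtain ⟨⟨hx1, hx2⟩, hy1, hy2⟩ := hz
    have hb1 : q ≤ q * x := le_mul_of_one_le_right hq.le hx1
    have hb2 : q * x ≤ q * (p - 1) := mul_le_mul_of_nonneg_left (by omega) hq.le
    have hb3 : p ≤ p * y := le_mul_of_one_le_right hp.le hy1
    have hb4 : p * y ≤ p * (q - 1) := mul_le_mul_of_nonneg_left (by omega) hp.le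
    have hr1 : q * (p - 1) = p * q - q := by ring
    have hr2 : p * (q - 1) = p * q - p := by ring
    have hsne := s_ne p q x y hp hpq hx1 (by omega)
    rw [Finset.mem_filter]
    constructor
    · rw [mem_Ioc]
      dsimp only
      split_ifs with h <;> omega
    · have hd1 := not_dvd_s (p := p) (q := q) (x := x) (y := y) hpq hp hx1 (by omega) 0
      have hd2 := not_dvd_s' (p := p) (q := q) (x := x) (y := y) hpq hq hy1 (by omega) 0
      have hd3 := not_dvd_s (p := p) (q := q) (x := x) (y := y) hpq hp hx1 (by omega) 1
      have hd4 := not_dvd_s' (p := p) (q := q) (x := x) (y := y) hpq hq hy1 (by omega) 1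
      simp only [zero_mul, sub_zero, one_mul] at hd1 hd2 hd3 hd4
      dsimp only
      split_ifs with h
      · push_neg; exact ⟨hd1, hd2⟩
      · push_neg; exact ⟨hd3, hd4⟩
  -- hj : inverse maps into R
  · intro n hn
    rw [Finset.mem_filter, mem_Ioc] at hn
    obtain ⟨⟨hn1, hn2⟩, hnd⟩ := hn
    push_neg at hnd
    simp only [mem_product, mem_Ioc]
    have hx0 : 0 ≤ (c * n) % p := Int.emod_nonneg _ hp.ne'
    have hxp : (c * n) % p < p := Int.emod_lt_of_pos _ hp
    have hy0 : 0 ≤ (d * n) % q := Int.emod_nonneg _ hq.ne'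
    have hyq : (d * n) % q < q := Int.emod_lt_of_pos _ hq
    have hxne : (c * n) % p ≠ 0 := by
      intro h0
      have hdv : p ∣ c * n := Int.dvd_of_emod_eq_zero h0
      have : p ∣ n := by
        have h4 : n = p * (a * n) + (c * n) * q := by linear_combination n * hac.symm
        rw [h4]
        exact dvd_add (dvd_mul_right p _) (hdv.mul_right q)
      exact hnd.1 this
    have hyne : (d * n) % q ≠ 0 := by
      intro h0
      have hdv : q ∣ d * n := Int.dvd_of_emod_eq_zero h0
      have : q ∣ n := by
        have h4 : n = q * (b * n) + (d * n) * p := by linear_combination n * hbd.symm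
        rw [h4]
        exact dvd_add (dvd_mul_right q _) (hdv.mul_right p)
      exact hnd.2 this
    omega
  -- left inverse
  · rintro ⟨x, y⟩ hz
    simp only [mem_product, mem_Ioc] at hz
    obtain ⟨⟨hx1, hx2⟩, hy1, hy2⟩ := hz
    have e1 : ∀ E : ℤ, (E = q * x + p * y ∨ E = q * x + p * y - p * q) →
        ((c * E) % p, (d * E) % q) = (x, y) := by
      intro E hE
      have hcx : ∃ K, c * E = x + p * K := by
        rcases hE with h | h
        · exact ⟨c * y - a * x, by rw [h]; linear_combination x * hac⟩
        · exact ⟨c * y - a * x - c * q, by rw [h]; linear_combination x * hac⟩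
      have hdy : ∃ K, d * E = y + q * K := by
        rcases hE with h | h
        · exact ⟨d * x - b * y, by rw [h]; linear_combination y * hbd⟩
        · exact ⟨d * x - b * y - d * p, by rw [h]; linear_combination y * hbd⟩
      obtain ⟨K1, hK1⟩ := hcx
      obtain ⟨K2, hK2⟩ := hdy
      rw [hK1, hK2, Int.add_mul_emod_self_left, Int.add_mul_emod_self_left,
        Int.emod_eq_of_lt (by omega) (by omega), Int.emod_eq_of_lt (by omega) (by omega)]
    dsimp only
    split_ifs with h
    · exact e1 _ (Or.inl rfl)
    · exact e1 _ (Or.inr rfl)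
  -- right inverse
  · intro n hn
    rw [Finset.mem_filter, mem_Ioc] at hn
    obtain ⟨⟨hn1, hn2⟩, hnd⟩ := hn
    push_neg at hnd
    set x := (c * n) % p with hxdef
    set y := (d * n) % q with hydef
    have hx0 : 0 ≤ x := Int.emod_nonneg _ hp.ne'
    have hxp : x < p := Int.emod_lt_of_pos _ hp
    have hy0 : 0 ≤ y := Int.emod_nonneg _ hq.ne'
    have hyq : y < q := Int.emod_lt_of_pos _ hq
    have hxe : x = c * n - p * ((c * n) / p) := by rw [hxdef, Int.emod_def]
    have hye : y = d * n - q * ((d * n) / q) := by rw [hydef, Int.emod_def]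
    have hdp : p ∣ q * x + p * y - n := by
      refine ⟨-(a * n) - q * ((c * n) / p) + y, ?_⟩
      rw [hxe]
      linear_combination n * hac
    have hdq : q ∣ q * x + p * y - n := by
      refine ⟨-(b * n) - p * ((d * n) / q) + x, ?_⟩
      rw [hye]
      linear_combination n * hbd
    obtain ⟨t, ht⟩ := hpq.mul_dvd hdp hdq
    have hxb1 : 0 ≤ q * x := mul_nonneg hq.le hx0
    have hxb2 : q * x ≤ q * (p - 1) := mul_le_mul_of_nonneg_left (by omega) hq.le
    have hyb1 : 0 ≤ p * y := mul_nonneg hp.le hy0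
    have hyb2 : p * y ≤ p * (q - 1) := mul_le_mul_of_nonneg_left (by omega) hp.le
    have hr1 : q * (p - 1) = p * q - q := by ring
    have hr2 : p * (q - 1) = p * q - p := by ring
    have ht0 : 0 ≤ t := by
      by_contra hcon
      push_neg at hcon
      have : p * q * t ≤ p * q * (-1) := by
        apply mul_le_mul_of_nonneg_left (by omega) (by positivity)
      omega
    have ht1 : t ≤ 1 := by
      by_contra hcon
      push_neg at hcon
      have : p * q * 2 ≤ p * q * t := by
        apply mul_le_mul_of_nonneg_left (by omega) (by positivity)
      omega
    have ht01 : t = 0 ∨ t = 1 := by omega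
    show (if q * x + p * y < p * q then q * x + p * y else q * x + p * y - p * q) = n
    rcases ht01 with h | h
    · subst h
      rw [if_pos (by omega)]
      omega
    · subst h
      rw [if_neg (by omega)]
      omega
  -- value equality
  · rintro ⟨x, y⟩ hz
    simp only [mem_product, mem_Ioc] at hz
    obtain ⟨⟨hx1, hx2⟩, hy1, hy2⟩ := hz
    have hsne := s_ne p q x y hp hpq hx1 (by omega)
    dsimp only
    split_ifs with h
    · rw [jump_eval_pos hp hq hpq hx1 (by omega) hy1 (by omega)]
      ring
    · rw [jump_eval_neg hp hq hpq hx1 (by omega) hy1 (by omega)]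
      ring

end WeightedJumpAux

/-- For coprime positive integers `p` and `q`,
`6 ∑_{n=1}^{pq−1} (pq − n) j(n) = −(p−1)(p+1)(q−1)(q+1)`. -/
theorem weighted_jump_sum
    (p q : ℤ) (hp : 0 < p) (hq : 0 < q) (hpq : IsCoprime p q) :
    6 * ∑ n ∈ Finset.Icc (1 : ℤ) (p * q - 1), (p * q - n) * torusJump p q n =
      -((p - 1) * (p + 1) * (q - 1) * (q + 1)) := by
  have hIcc : Finset.Icc (1 : ℤ) (p * q - 1) = Finset.Ioc (0 : ℤ) (p * q - 1) := by
    ext n; simp only [Finset.mem_Icc, Finset.mem_Ioc]; omega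
  rw [hIcc, step1 p q hp hq hpq]
  have h4 := step4 p q hp hq hpq
  have hA := sumA p q hp hq hpq
  have hcancel : (2 * p) * (6 * ∑ z ∈ Finset.Ioc (0:ℤ) (p-1) ×ˢ Finset.Ioc (0:ℤ) (q-1),
      (if q * z.1 + p * z.2 < p * q then p * q - (q * z.1 + p * z.2)
       else q * z.1 + p * z.2 - 2 * (p * q)))
      = (2 * p) * (-((p - 1) * (p + 1) * (q - 1) * (q + 1))) := by
    linear_combination 6 * p * h4 + hA
  have h2p : (2 * p : ℤ) ≠ 0 := by positivity
  exact mul_left_cancel₀ h2p hcancel
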